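/- Let f : [a, b] → ℝ be continuous and g : [a, b] → ℝ be defined by the Skorokhod reflection g(t) = f(t) − min(0, inf_{s∈[a,t]} f(s)). Then the modulus of continuity of g satisfies m(δ; g) ≤ 2 m(δ; f) for all δ > 0, where m(δ; h) = sup{ |h(t) − h(s)| : s, t ∈ [a,b], |t − s| ≤ δ }. -/

import Mathlib

open Set

/-- The modulus of continuity of `h` on `[a,b]` at scale `δ`. -/
noncomputable def modCont (a b : ℝ) (h : ℝ → ℝ) (δ : ℝ) : ℝ :=
  sSup {v : ℝ | ∃ s ∈ Set.Icc a b, ∃ t ∈ Set.Icc a b, |t - s| ≤ δ ∧ v = |h t - h s|}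

/-- **Skorokhod reflection modulus estimate.** If `f : [a,b] → ℝ` is continuous and
`g(t) = f(t) − min(0, inf_{s∈[a,t]} f(s))` is its Skorokhod reflection, then
`m(δ; g) ≤ 2 m(δ; f)` for every `δ > 0`. -/
theorem modCont_skorokhod_reflection_le (a b : ℝ) (hab : a ≤ b) (f : ℝ → ℝ)
    (hf : ContinuousOn f (Set.Icc a b)) (g : ℝ → ℝ)
    (hg : ∀ t, g t = f t - min 0 (sInf (f '' Set.Icc a t))) :
    ∀ δ : ℝ, 0 < δ → modCont a b g δ ≤ 2 * modCont a b f δ := by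
  intro δ hδ
  obtain ⟨C, hC⟩ := (isCompact_Icc : IsCompact (Icc a b)).exists_bound_of_continuousOn hf
  set m := modCont a b f δ with hm
  have hbdd : BddAbove {v : ℝ | ∃ s ∈ Icc a b, ∃ t ∈ Icc a b, |t - s| ≤ δ ∧ v = |f t - f s|} := by
    refine ⟨2 * C, ?_⟩
    rintro v ⟨s, hs, t, ht, -, rfl⟩
    have h1 := hC s hs; have h2 := hC t ht
    rw [Real.norm_eq_abs] at h1 h2
    have : |f t - f s| ≤ |f t| + |f s| := by
      simpa [sub_eq_add_neg] using abs_add_le (f t) (-f s)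
    linarith
  have hmem : ∀ s ∈ Icc a b, ∀ t ∈ Icc a b, |t - s| ≤ δ → |f t - f s| ≤ m := by
    intro s hs t ht h
    exact le_csSup hbdd ⟨s, hs, t, ht, h, rfl⟩
  have hm0 : 0 ≤ m := by
    have : (0 : ℝ) ∈ {v : ℝ | ∃ s ∈ Icc a b, ∃ t ∈ Icc a b, |t - s| ≤ δ ∧ v = |f t - f s|} :=
      ⟨a, left_mem_Icc.2 hab, a, left_mem_Icc.2 hab, by simpa using hδ.le, by simp⟩
    exact le_csSup hbdd this
  set L : ℝ → ℝ := fun x => min 0 (sInf (f '' Icc a x)) with hL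
  have hbddb : ∀ t ∈ Icc a b, BddBelow (f '' Icc a t) := by
    intro t ht
    refine ⟨-C, ?_⟩
    rintro y ⟨x, hx, rfl⟩
    have hx' : x ∈ Icc a b := ⟨hx.1, hx.2.trans ht.2⟩
    have := hC x hx'
    have := (abs_le.mp this).1
    linarith
  have key : ∀ s ∈ Icc a b, ∀ t ∈ Icc a b, s ≤ t → |t - s| ≤ δ → |g t - g s| ≤ 2 * m := by
    intro s hs t ht hst hd
    have hat : a ≤ t := hs.1.trans hst
    -- minimum of f on [a,t]
    obtain ⟨u, hu, humin⟩ := (isCompact_Icc : IsCompact (Icc a t)).exists_isMinOn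
      ⟨a, left_mem_Icc.2 hat⟩ (hf.mono (Icc_subset_Icc_right ht.2))
    have humin' : ∀ x ∈ Icc a t, f u ≤ f x := fun x hx => humin hx
    have hInf_t : sInf (f '' Icc a t) = f u := by
      refine le_antisymm (csInf_le (hbddb t ht) ⟨u, hu, rfl⟩) ?_
      refine le_csInf ⟨f a, a, left_mem_Icc.2 hat, rfl⟩ ?_
      rintro y ⟨x, hx, rfl⟩
      exact humin' x hx
    have hLs_le : L s ≤ f s := by
      have h1 : sInf (f '' Icc a s) ≤ f s :=
        csInf_le (hbddb s hs) ⟨s, right_mem_Icc.2 hs.1, rfl⟩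
      exact (min_le_right _ _).trans h1
    have hLs0 : L s ≤ 0 := min_le_left _ _
    have hLmono : L t ≤ L s := by
      refine min_le_min le_rfl (csInf_le_csInf (hbddb t ht) ⟨f a, a, left_mem_Icc.2 hs.1, rfl⟩ ?_)
      exact image_mono (f := f) (Icc_subset_Icc_right hst)
    have hdiff : L s - L t ≤ m := by
      rcases le_total u s with hus | hsu
      · -- min attained on [a,s], so L s = L t
        have h1 : sInf (f '' Icc a s) ≤ f u :=
          csInf_le (hbddb s hs) ⟨u, ⟨hu.1, hus⟩, rfl⟩
        have h2 : L s ≤ L t := by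
          rw [hL]; simp only
          rw [hInf_t]
          exact min_le_min le_rfl h1
        linarith [hm0]
      · have hub : u ∈ Icc a b := ⟨hu.1, hu.2.trans ht.2⟩
        have hus : |u - s| ≤ δ := by
          rw [abs_of_nonneg (by linarith)]
          rw [abs_of_nonneg (by linarith)] at hd
          linarith [hu.2]
        have hfm : |f u - f s| ≤ m := hmem s hs u hub hus
        rcases le_total (f u) 0 with hfu | hfu
        · have hLt : L t = f u := by
            rw [hL]; simp only [hInf_t]; exact min_eq_right hfu
          have : f s - f u ≤ |f u - f s| := by
            rw [abs_sub_comm]; exact le_abs_self _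
          linarith
        · have hLt : L t = 0 := by
            rw [hL]; simp only [hInf_t]; exact min_eq_left hfu
          linarith
    have habs : |L t - L s| ≤ m := by
      rw [abs_of_nonpos (by linarith)]
      linarith
    have hfd : |f t - f s| ≤ m := hmem s hs t ht hd
    have : |g t - g s| ≤ |f t - f s| + |L t - L s| := by
      rw [hg t, hg s]
      have : f t - L t - (f s - L s) = (f t - f s) + -(L t - L s) := by ring
      rw [hL] at this ⊢
      simp only at this ⊢
      rw [this]
      exact (abs_add_le _ _).trans (by rw [abs_neg])
    linarith
  refine Real.sSup_le ?_ (by linarith)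
  rintro v ⟨s, hs, t, ht, hd, rfl⟩
  rcases le_total s t with h | h
  · exact key s hs t ht h hd
  · rw [abs_sub_comm]
    exact key t ht s hs h (by rwa [abs_sub_comm])
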